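/- Let h = g ∘ f with f : ℝ^d → ℝ^{d'} a nearly invertible representation function, i.e., there exists a reconstruction map s : ℝ^{d'} → ℝ^d and δ > 0 such that whenever f(x) = z, ‖x − s(z)‖ ≤ δ. Suppose the unseen-domain true hypothesis h^{(u)} = g^{(u)} ∘ f^{(u)} : ℝ^d → ℝ is K-Lipschitz continuous and the loss function ℓ is Q-Lipschitz in its second argument (ℓ(a, b) − Q|γ| ≤ ℓ(a, b + γ) ≤ ℓ(a, b) + Q|γ| for all a, b, γ), is a distance metric, and is bounded by a finite positive number L. Then E_{x∼μ^{(u)}}[ℓ(h(x), h^{(u)}(x))] − E_{x∼μ^{(s)}}[ℓ(h(x), h^{(u)}(x))] ≤ L ‖f_# μ^{(u)} − f_# μ^{(s)}‖₁ + 2QKδ. -/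

import Mathlib

open MeasureTheory

/-- The L¹ (total variation) distance between two measures:
`‖μ − ν‖₁ = ∫ |dμ/dλ − dν/dλ| dλ` where `λ = μ + ν` is a common dominating measure. -/
noncomputable def l1Dist {α : Type*} [MeasurableSpace α] (μ ν : Measure α) : ℝ :=
  ∫ x, |(μ.rnDeriv (μ + ν) x).toReal - (ν.rnDeriv (μ + ν) x).toReal| ∂(μ + ν)

open Filter Topology Set ENNReal in
/-- Tightness of a finite measure on a complete second-countable metric space. -/
lemma exists_compact_large_measure {X : Type*} [MetricSpace X] [CompleteSpace X]
    [SecondCountableTopology X] [MeasurableSpace X] [OpensMeasurableSpace X]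
    (μ : Measure X) [IsFiniteMeasure μ] {ε : ℝ≥0∞} (hε : ε ≠ 0) :
    ∃ K : Set X, IsCompact K ∧ μ Kᶜ ≤ ε := by
  rcases isEmpty_or_nonempty X with hX | hX
  · refine ⟨∅, isCompact_empty, ?_⟩
    have : (∅ᶜ : Set X) = ∅ := Set.eq_empty_of_isEmpty _
    simp [this]
  obtain ⟨u, hu⟩ := TopologicalSpace.exists_dense_seq X
  obtain ⟨δ, hδpos, hδsum⟩ := ENNReal.exists_pos_sum_of_countable hε ℕ
  set S : ℕ → ℕ → Set X := fun n m => ⋃ i ∈ Finset.range m,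
    Metric.closedBall (u i) (1 / (n + 1)) with hS
  have Sclosed : ∀ n m, IsClosed (S n m) := fun n m =>
    (Finset.range m).finite_toSet.isClosed_biUnion fun i _ => Metric.isClosed_closedBall
  have Smono : ∀ n, Monotone (S n) := by
    intro n a b hab
    intro x hx
    simp only [hS, Set.mem_iUnion] at hx ⊢
    obtain ⟨i, hi, hxi⟩ := hx
    exact ⟨i, Finset.mem_range.2 ((Finset.mem_range.1 hi).trans_le hab), hxi⟩
  have Scov : ∀ n, ⋃ m, S n m = Set.univ := by
    intro n
    ext x
    simp only [Set.mem_iUnion, Set.mem_univ, iff_true]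
    obtain ⟨i, hi⟩ := Metric.denseRange_iff.1 hu x (1 / (n + 1)) (by positivity)
    exact ⟨i + 1, Set.mem_biUnion (Finset.self_mem_range_succ i) (Metric.mem_closedBall.2 hi.le)⟩
  have hex : ∀ n, ∃ m, μ (S n m)ᶜ < δ n := by
    intro n
    have hmono : Antitone fun m => (S n m)ᶜ := fun a b hab =>
      Set.compl_subset_compl.2 (Smono n hab)
    have h0 : (⋂ m, (S n m)ᶜ) = ∅ := by
      rw [← Set.compl_iUnion, Scov n, Set.compl_univ]
    have htd := tendsto_measure_iInter_atTop
      (μ := μ) (fun m => ((Sclosed n m).measurableSet.compl).nullMeasurableSet) hmono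
      ⟨0, measure_ne_top μ _⟩
    rw [h0, measure_empty] at htd
    have := htd.eventually (gt_mem_nhds (ENNReal.coe_pos.2 (hδpos n)))
    exact this.exists
  choose m hm using hex
  refine ⟨⋂ n, S n (m n), ?_, ?_⟩
  · apply TotallyBounded.isCompact_of_isClosed
    · rw [Metric.totallyBounded_iff]
      intro r hr
      obtain ⟨n, hn⟩ : ∃ n : ℕ, 1 / ((n : ℝ) + 1) < r := by
        obtain ⟨n, hn⟩ := exists_nat_one_div_lt hr
        exact ⟨n, by exact_mod_cast hn⟩
      refine ⟨u '' (Finset.range (m n) : Set ℕ), (Set.toFinite _).image u, ?_⟩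
      intro x hx
      have hx' : x ∈ S n (m n) := Set.mem_iInter.1 hx n
      simp only [hS, Set.mem_iUnion] at hx'
      obtain ⟨i, hi, hxi⟩ := hx'
      refine Set.mem_biUnion ⟨i, by simpa using hi, rfl⟩ ?_
      exact Metric.mem_ball.2 (lt_of_le_of_lt (Metric.mem_closedBall.1 hxi) hn)
    · exact isClosed_iInter fun n => Sclosed n (m n)
  · rw [Set.compl_iInter]
    calc μ (⋃ n, (S n (m n))ᶜ) ≤ ∑' n, μ (S n (m n))ᶜ := measure_iUnion_le _
      _ ≤ ∑' n, (δ n : ℝ≥0∞) := ENNReal.tsum_le_tsum fun n => (hm n).le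
      _ ≤ ε := hδsum.le

/-- The key density estimate: for a measurable function with values in `[0, L]`, the
difference of integrals against two finite measures is controlled by `L` times the `l1Dist`. -/
lemma integral_sub_le_l1Dist {Z : Type*} [MeasurableSpace Z] (ν₁ ν₂ : Measure Z)
    [IsFiniteMeasure ν₁] [IsFiniteMeasure ν₂] {H : Z → ℝ} (hH : Measurable H)
    {L : ℝ} (hL : 0 ≤ L) (h0 : ∀ z, 0 ≤ H z) (hLb : ∀ z, H z ≤ L) :
    ∫ z, H z ∂ν₁ - ∫ z, H z ∂ν₂ ≤ L * l1Dist ν₁ ν₂ := by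
  set lam := ν₁ + ν₂ with hlam
  have hac1 : ν₁ ≪ lam := (Measure.le_add_right le_rfl).absolutelyContinuous
  have hac2 : ν₂ ≪ lam := (Measure.le_add_left le_rfl).absolutelyContinuous
  set r₁ : Z → ℝ := fun z => (ν₁.rnDeriv lam z).toReal with hr₁
  set r₂ : Z → ℝ := fun z => (ν₂.rnDeriv lam z).toReal with hr₂
  have hint1 : Integrable r₁ lam := Measure.integrable_toReal_rnDeriv
  have hint2 : Integrable r₂ lam := Measure.integrable_toReal_rnDeriv
  have hm1 : Integrable (fun z => H z * r₁ z) lam :=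
    hint1.bdd_mul hH.aestronglyMeasurable
      (ae_of_all _ fun z => by rw [Real.norm_eq_abs, abs_of_nonneg (h0 z)]; exact hLb z)
  have hm2 : Integrable (fun z => H z * r₂ z) lam :=
    hint2.bdd_mul hH.aestronglyMeasurable
      (ae_of_all _ fun z => by rw [Real.norm_eq_abs, abs_of_nonneg (h0 z)]; exact hLb z)
  have hi1 : ∫ z, H z ∂ν₁ = ∫ z, H z * r₁ z ∂lam := by
    rw [← integral_rnDeriv_smul hac1]
    congr 1
    ext z
    simp [smul_eq_mul, mul_comm, hr₁]
  have hi2 : ∫ z, H z ∂ν₂ = ∫ z, H z * r₂ z ∂lam := by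
    rw [← integral_rnDeriv_smul hac2]
    congr 1
    ext z
    simp [smul_eq_mul, mul_comm, hr₂]
  rw [hi1, hi2, ← integral_sub hm1 hm2]
  have hIR : Integrable (fun z => L * |r₁ z - r₂ z|) lam := ((hint1.sub hint2).abs).const_mul L
  calc ∫ z, (H z * r₁ z - H z * r₂ z) ∂lam
      ≤ ∫ z, L * |r₁ z - r₂ z| ∂lam := by
        apply integral_mono (hm1.sub hm2) hIR
        intro z
        simp only [Pi.sub_apply]
        have h1 := h0 z
        have h2 := hLb z
        have h3 : 0 ≤ r₁ z := ENNReal.toReal_nonneg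
        have h4 : 0 ≤ r₂ z := ENNReal.toReal_nonneg
        rcases abs_cases (r₁ z - r₂ z) with ⟨he, hsign⟩ | ⟨he, hsign⟩ <;> rw [he] <;> nlinarith
    _ = L * l1Dist ν₁ ν₂ := by
        rw [integral_const_mul]
        rfl

open Set in
/-- The main estimate, in the case where both the representation map and the risk integrand
are continuous on a Polish source space. -/
lemma aux_continuous {X Z : Type*} [TopologicalSpace X] [PolishSpace X]
    [MeasurableSpace X] [BorelSpace X]
    [TopologicalSpace Z] [MeasurableSpace Z] [BorelSpace Z] [T2Space Z]
    (μ1 μ2 : Measure X) [IsProbabilityMeasure μ1] [IsProbabilityMeasure μ2]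
    {f : X → Z} (hf : Continuous f) {I : X → ℝ} (hI : Continuous I)
    {L : ℝ} (hL : 0 ≤ L) (hI0 : ∀ x, 0 ≤ I x) (hIL : ∀ x, I x ≤ L)
    {osc : ℝ} (hosc : 0 ≤ osc) (hoscf : ∀ x y, f x = f y → I x ≤ I y + osc) :
    ∫ x, I x ∂μ1 - ∫ x, I x ∂μ2 ≤ L * l1Dist (μ1.map f) (μ2.map f) + osc := by
  letI := TopologicalSpace.upgradeIsCompletelyMetrizable X
  haveI : IsProbabilityMeasure (μ1.map f) :=
    Measure.isProbabilityMeasure_map hf.measurable.aemeasurable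
  haveI : IsProbabilityMeasure (μ2.map f) :=
    Measure.isProbabilityMeasure_map hf.measurable.aemeasurable
  have key : ∀ ε : ℝ, 0 < ε →
      ∫ x, I x ∂μ1 - ∫ x, I x ∂μ2 ≤ L * l1Dist (μ1.map f) (μ2.map f) + osc + 2 * L * ε := by
    intro ε hε
    -- a compact set of large measure for both measures
    obtain ⟨K, hK, hKc⟩ := exists_compact_large_measure (μ1 + μ2)
      (ε := ENNReal.ofReal ε) (ENNReal.ofReal_pos.2 hε).ne'
    have hKmeas : MeasurableSet K := hK.isClosed.measurableSet
    have hc1 : (μ1 Kᶜ).toReal ≤ ε := by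
      apply ENNReal.toReal_le_of_le_ofReal hε.le
      refine le_trans ?_ hKc
      exact le_trans (le_refl _) (by simp [Measure.add_apply, le_add_right (le_refl (μ1 Kᶜ))])
    have hc2 : (μ2 Kᶜ).toReal ≤ ε := by
      apply ENNReal.toReal_le_of_le_ofReal hε.le
      refine le_trans ?_ hKc
      simp [Measure.add_apply]
    -- the fiberwise-sup function on the representation space
    set H : Z → ℝ := fun z => sSup (insert 0 (I '' (K ∩ f ⁻¹' {z}))) with hHdef
    have hbdd : ∀ z, BddAbove (insert 0 (I '' (K ∩ f ⁻¹' {z}))) := by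
      intro z
      refine ⟨L, ?_⟩
      rintro y (rfl | ⟨x, hx, rfl⟩)
      · exact hL
      · exact hIL x
    have hne : ∀ z, (insert (0:ℝ) (I '' (K ∩ f ⁻¹' {z}))).Nonempty :=
      fun z => ⟨0, Set.mem_insert _ _⟩
    have hH0 : ∀ z, 0 ≤ H z := fun z => le_csSup (hbdd z) (Set.mem_insert _ _)
    have hHL : ∀ z, H z ≤ L := by
      intro z
      apply csSup_le (hne z)
      rintro y (rfl | ⟨x, hx, rfl⟩)
      · exact hL
      · exact hIL x
    have hle : ∀ x ∈ K, I x ≤ H (f x) := by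
      intro x hx
      exact le_csSup (hbdd _) (Set.mem_insert_of_mem _ ⟨x, ⟨hx, rfl⟩, rfl⟩)
    have hge : ∀ x ∈ K, H (f x) ≤ I x + osc := by
      intro x hx
      apply csSup_le (hne _)
      rintro y (rfl | ⟨x', ⟨hx'K, hx'f⟩, rfl⟩)
      · exact add_nonneg (hI0 x) hosc
      · exact hoscf x' x (by simpa using hx'f)
    -- measurability of H
    have hHmeas : Measurable H := by
      apply measurable_of_Ici
      intro t
      rcases le_or_gt t 0 with ht | ht
      · have : H ⁻¹' Ici t = univ := by
          ext z
          simp only [mem_preimage, mem_Ici, mem_univ, iff_true]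
          exact le_trans ht (hH0 z)
        rw [this]
        exact MeasurableSet.univ
      · have himg : H ⁻¹' Ici t = f '' (K ∩ I ⁻¹' Ici t) := by
          ext z
          constructor
          · intro hz
            have hz' : t ≤ H z := hz
            have hcomp : IsCompact (insert (0:ℝ) (I '' (K ∩ f ⁻¹' {z}))) :=
              ((hK.inter_right (isClosed_singleton.preimage hf)).image_of_continuousOn
                hI.continuousOn).insert 0
            have hmem := hcomp.sSup_mem (hne z)
            rcases Set.mem_insert_iff.1 hmem with h0eq | ⟨x, ⟨hxK, hxf⟩, hIx⟩
            · exact absurd (hz'.trans_eq h0eq) (not_le.2 ht)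
            · refine ⟨x, ⟨hxK, ?_⟩, by simpa using hxf⟩
              simp only [mem_preimage, mem_Ici]
              rw [hIx]
              exact hz'
          · rintro ⟨x, ⟨hxK, hxt⟩, rfl⟩
            exact le_trans hxt (hle x hxK)
        rw [himg]
        exact (((hK.inter_right (isClosed_Ici.preimage hI)).image hf).isClosed).measurableSet
    -- integrability
    have hint_I1 : Integrable I μ1 :=
      (integrable_const L).mono' hI.aestronglyMeasurable
        (ae_of_all _ fun x => by rw [Real.norm_eq_abs, abs_of_nonneg (hI0 x)]; exact hIL x)
    have hint_I2 : Integrable I μ2 :=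
      (integrable_const L).mono' hI.aestronglyMeasurable
        (ae_of_all _ fun x => by rw [Real.norm_eq_abs, abs_of_nonneg (hI0 x)]; exact hIL x)
    have hmHf : Measurable fun x => H (f x) := hHmeas.comp hf.measurable
    have hint_Hf1 : Integrable (fun x => H (f x)) μ1 :=
      (integrable_const L).mono' hmHf.aestronglyMeasurable
        (ae_of_all _ fun x => by
          rw [Real.norm_eq_abs, abs_of_nonneg (hH0 (f x))]; exact hHL (f x))
    have hint_Hf2 : Integrable (fun x => H (f x)) μ2 :=
      (integrable_const L).mono' hmHf.aestronglyMeasurable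
        (ae_of_all _ fun x => by
          rw [Real.norm_eq_abs, abs_of_nonneg (hH0 (f x))]; exact hHL (f x))
    -- bounds on the complement of K
    have hcompl1 : ∫ x in Kᶜ, I x ∂μ1 ≤ L * ε := by
      calc ∫ x in Kᶜ, I x ∂μ1 ≤ ∫ _ in Kᶜ, L ∂μ1 :=
            setIntegral_mono_on hint_I1.integrableOn (integrableOn_const) hKmeas.compl fun x _ => hIL x
        _ = (μ1 Kᶜ).toReal * L := by rw [setIntegral_const]; simp [smul_eq_mul, Measure.real]
        _ ≤ ε * L := by
            apply mul_le_mul_of_nonneg_right hc1 hL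
        _ = L * ε := mul_comm _ _
    have hcompl2 : ∫ x in Kᶜ, H (f x) ∂μ2 ≤ L * ε := by
      calc ∫ x in Kᶜ, H (f x) ∂μ2 ≤ ∫ _ in Kᶜ, L ∂μ2 :=
            setIntegral_mono_on hint_Hf2.integrableOn (integrableOn_const) hKmeas.compl fun x _ => hHL (f x)
        _ = (μ2 Kᶜ).toReal * L := by rw [setIntegral_const]; simp [smul_eq_mul, Measure.real]
        _ ≤ ε * L := mul_le_mul_of_nonneg_right hc2 hL
        _ = L * ε := mul_comm _ _
    -- the main chain of estimates
    have step1 : ∫ x, I x ∂μ1 ≤ ∫ x, H (f x) ∂μ1 + L * ε := by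
      have hsplit : ∫ x, I x ∂μ1 = ∫ x in K, I x ∂μ1 + ∫ x in Kᶜ, I x ∂μ1 :=
        (integral_add_compl hKmeas hint_I1).symm
      have h1 : ∫ x in K, I x ∂μ1 ≤ ∫ x in K, H (f x) ∂μ1 :=
        setIntegral_mono_on hint_I1.integrableOn hint_Hf1.integrableOn hKmeas
          fun x hx => hle x hx
      have h2 : ∫ x in K, H (f x) ∂μ1 ≤ ∫ x, H (f x) ∂μ1 :=
        setIntegral_le_integral hint_Hf1 (ae_of_all _ fun x => hH0 (f x))
      linarith
    have step2 : ∫ x, H (f x) ∂μ2 ≤ ∫ x, I x ∂μ2 + osc + L * ε := by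
      have hsplit : ∫ x, H (f x) ∂μ2 = ∫ x in K, H (f x) ∂μ2 + ∫ x in Kᶜ, H (f x) ∂μ2 :=
        (integral_add_compl hKmeas hint_Hf2).symm
      have h1 : ∫ x in K, H (f x) ∂μ2 ≤ ∫ x in K, (I x + osc) ∂μ2 :=
        setIntegral_mono_on hint_Hf2.integrableOn
          (hint_I2.integrableOn.add (integrableOn_const))
          hKmeas fun x hx => hge x hx
      have h2 : ∫ x in K, (I x + osc) ∂μ2 = ∫ x in K, I x ∂μ2 + (μ2 K).toReal * osc := by
        rw [integral_add hint_I2.integrableOn (integrableOn_const)]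
        rw [setIntegral_const, smul_eq_mul, Measure.real]
      have h3 : (μ2 K).toReal * osc ≤ osc := by
        have : (μ2 K).toReal ≤ 1 := by
          have := prob_le_one (μ := μ2) (s := K)
          exact ENNReal.toReal_le_of_le_ofReal one_pos.le (by simpa using this)
        nlinarith
      have h4 : ∫ x in K, I x ∂μ2 ≤ ∫ x, I x ∂μ2 :=
        setIntegral_le_integral hint_I2 (ae_of_all _ fun x => hI0 x)
      linarith
    have hmap1 : ∫ x, H (f x) ∂μ1 = ∫ z, H z ∂(μ1.map f) :=
      (integral_map hf.measurable.aemeasurable hHmeas.aestronglyMeasurable).symm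
    have hmap2 : ∫ x, H (f x) ∂μ2 = ∫ z, H z ∂(μ2.map f) :=
      (integral_map hf.measurable.aemeasurable hHmeas.aestronglyMeasurable).symm
    have hmain : ∫ z, H z ∂(μ1.map f) - ∫ z, H z ∂(μ2.map f) ≤
        L * l1Dist (μ1.map f) (μ2.map f) :=
      integral_sub_le_l1Dist _ _ hHmeas hL hH0 hHL
    rw [hmap1] at step1
    rw [hmap2] at step2
    linarith
  -- take the limit ε → 0
  refine le_of_forall_pos_le_add fun ε hε => ?_
  have h2L1 : (0:ℝ) < 2 * L + 1 := by linarith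
  have := key (ε / (2 * L + 1)) (by positivity)
  refine le_trans this ?_
  have : 2 * L * (ε / (2 * L + 1)) ≤ ε := by
    rw [div_eq_inv_mul]
    rw [show 2 * L * ((2 * L + 1)⁻¹ * ε) = (2 * L) / (2 * L + 1) * ε by ring]
    have : (2 * L) / (2 * L + 1) ≤ 1 := by
      rw [div_le_one h2L1]
      linarith
    nlinarith
  linarith

/-- The main estimate for measurable data on a standard Borel source space. -/
lemma aux_measurable {X Z : Type*} [MeasurableSpace X] [StandardBorelSpace X]
    [tZ : TopologicalSpace Z] [MeasurableSpace Z] [BorelSpace Z] [T2Space Z]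
    [SecondCountableTopology Z]
    (μ1 μ2 : Measure X) [IsProbabilityMeasure μ1] [IsProbabilityMeasure μ2]
    {f : X → Z} (hf : Measurable f) {I : X → ℝ} (hI : Measurable I)
    {L : ℝ} (hL : 0 ≤ L) (hI0 : ∀ x, 0 ≤ I x) (hIL : ∀ x, I x ≤ L)
    {osc : ℝ} (hosc : 0 ≤ osc) (hoscf : ∀ x y, f x = f y → I x ≤ I y + osc) :
    ∫ x, I x ∂μ1 - ∫ x, I x ∂μ2 ≤ L * l1Dist (μ1.map f) (μ2.map f) + osc := by
  letI := upgradeStandardBorel X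
  obtain ⟨t', ht'le, ht'cont, ht'polish⟩ := (hf.prodMk hI).exists_continuous
  have hb : @borel X t' = ‹MeasurableSpace X› :=
    (borel_eq_borel_of_le ht'polish
      (upgradeStandardBorel X).toPolishSpace ht'le).trans
      (eq_borel_upgradeStandardBorel X).symm
  have hBt' : @BorelSpace X t' _ := ⟨hb.symm⟩
  have hfc : @Continuous X Z t' tZ f := ht'cont.fst
  have hIc : @Continuous X ℝ t' _ I := ht'cont.snd
  exact @aux_continuous X Z t' ht'polish _ hBt' tZ _ _ _ μ1 μ2 _ _ f hfc I hIc L hL hI0 hIL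
    osc hosc hoscf

/-- Extension of the discrepancy estimate of Lemma 1 to nearly invertible representation maps:
if there is a reconstruction map `s` with `‖x − s(f(x))‖ ≤ δ`, the true unseen hypothesis
`h⁽ᵘ⁾` is `K`-Lipschitz, and the loss `ℓ` is a distance metric, `Q`-Lipschitz in its second
argument and bounded by `L`, then
`E_{μ⁽ᵘ⁾}[ℓ(h, h⁽ᵘ⁾)] − E_{μ⁽ˢ⁾}[ℓ(h, h⁽ᵘ⁾)] ≤ L ‖f_# μ⁽ᵘ⁾ − f_# μ⁽ˢ⁾‖₁ + 2QKδ`. -/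
theorem nearly_invertible_risk_difference_bound
    (d d' : ℕ)
    (μu μs : Measure (EuclideanSpace ℝ (Fin d)))
    [IsProbabilityMeasure μu] [IsProbabilityMeasure μs]
    (f fu : EuclideanSpace ℝ (Fin d) → EuclideanSpace ℝ (Fin d'))
    (g gu : EuclideanSpace ℝ (Fin d') → ℝ)
    (hf : Measurable f) (hfu : Measurable fu)
    (hg : Measurable g) (hgu : Measurable gu)
    -- `f` is nearly invertible: a reconstruction map `s` with error at most `δ`
    (s : EuclideanSpace ℝ (Fin d') → EuclideanSpace ℝ (Fin d))
    (δ : ℝ) (hδ : 0 < δ)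
    (hrecon : ∀ x, ‖x - s (f x)‖ ≤ δ)
    -- the true unseen hypothesis `h⁽ᵘ⁾ = g⁽ᵘ⁾ ∘ f⁽ᵘ⁾` is `K`-Lipschitz
    (K : ℝ) (hK : 0 ≤ K)
    (hLip : ∀ x y, |gu (fu x) - gu (fu y)| ≤ K * ‖x - y‖)
    -- the loss is `Q`-Lipschitz in its second argument, a distance metric, bounded by `L`
    (ℓ : ℝ → ℝ → ℝ) (Q : ℝ) (hQ : 0 ≤ Q)
    (hℓmeas : Measurable (Function.uncurry ℓ))
    (hℓQ : ∀ a b γ : ℝ, ℓ a b - Q * |γ| ≤ ℓ a (b + γ) ∧ ℓ a (b + γ) ≤ ℓ a b + Q * |γ|)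
    (hℓnonneg : ∀ a b, 0 ≤ ℓ a b)
    (hℓsymm : ∀ a b, ℓ a b = ℓ b a)
    (hℓtri : ∀ a b c, ℓ a c ≤ ℓ a b + ℓ b c)
    (hℓzero : ∀ a b, ℓ a b = 0 ↔ a = b)
    (L : ℝ) (hL : 0 < L)
    (hℓbdd : ∀ a b, ℓ a b ≤ L) :
    (∫ x, ℓ (g (f x)) (gu (fu x)) ∂μu) - (∫ x, ℓ (g (f x)) (gu (fu x)) ∂μs) ≤
      L * l1Dist (μu.map f) (μs.map f) + 2 * Q * K * δ := by
  set I : EuclideanSpace ℝ (Fin d) → ℝ := fun x => ℓ (g (f x)) (gu (fu x)) with hIdef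
  have hImeas : Measurable I :=
    hℓmeas.comp ((hg.comp hf).prodMk (hgu.comp hfu))
  have hI0 : ∀ x, 0 ≤ I x := fun x => hℓnonneg _ _
  have hIL : ∀ x, I x ≤ L := fun x => hℓbdd _ _
  have hosc : (0:ℝ) ≤ 2 * Q * K * δ := by positivity
  have hoscf : ∀ x y, f x = f y → I x ≤ I y + 2 * Q * K * δ := by
    intro x y hxy
    have h1 : |gu (fu x) - gu (fu (s (f x)))| ≤ K * δ :=
      le_trans (hLip x (s (f x))) (mul_le_mul_of_nonneg_left (hrecon x) hK)
    have h2 : |gu (fu (s (f x))) - gu (fu y)| ≤ K * δ := by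
      refine le_trans (hLip (s (f x)) y) ?_
      have : ‖s (f x) - y‖ = ‖y - s (f y)‖ := by rw [norm_sub_rev, hxy]
      rw [this]
      exact mul_le_mul_of_nonneg_left (hrecon y) hK
    have hγ : |gu (fu x) - gu (fu y)| ≤ 2 * (K * δ) := by
      calc |gu (fu x) - gu (fu y)| ≤
          |gu (fu x) - gu (fu (s (f x)))| + |gu (fu (s (f x))) - gu (fu y)| :=
            abs_sub_le _ _ _
        _ ≤ 2 * (K * δ) := by linarith
    have hQγ : Q * |gu (fu x) - gu (fu y)| ≤ 2 * Q * K * δ := by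
      calc Q * |gu (fu x) - gu (fu y)| ≤ Q * (2 * (K * δ)) :=
            mul_le_mul_of_nonneg_left hγ hQ
        _ = 2 * Q * K * δ := by ring
    have hkey := (hℓQ (g (f x)) (gu (fu y)) (gu (fu x) - gu (fu y))).2
    rw [add_sub_cancel] at hkey
    calc I x = ℓ (g (f x)) (gu (fu x)) := rfl
      _ ≤ ℓ (g (f x)) (gu (fu y)) + Q * |gu (fu x) - gu (fu y)| := hkey
      _ = ℓ (g (f y)) (gu (fu y)) + Q * |gu (fu x) - gu (fu y)| := by rw [hxy]
      _ ≤ I y + 2 * Q * K * δ := by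
          rw [hIdef]
          linarith
  exact aux_measurable μu μs hf hImeas hL.le hI0 hIL hosc hoscf
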